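/- Let (M, μ) be a measure space, let 1 < p < n be reals, p* = np/(n−p), and β = p*/(2p*+1). Let h ≤ 0 be a real constant, let u : M → ℝ be measurable with u > 0 a.e., let a : M → ℝ be measurable with a ≥ 0 a.e., and let f : M → ℝ be measurable. Assume that u^(p−1), f·u^(p*−1), a·u^(−(p*+1)), u^(p*) and |f⁻|^(p*) are μ-integrable and that ∫ h·u^(p−1) dμ = ∫ f·u^(p*−1) dμ + ∫ a·u^(−(p*+1)) dμ. Then ∫ a^β dμ ≤ (∫ |f⁻|^(p*) dμ)^(β/p*) · (∫ u^(p*) dμ)^(2p*/(2p*+1)). -/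

import Mathlib

open MeasureTheory Real

private lemma memLp_of_integrable_rpow {α : Type*} [MeasurableSpace α] {μ : Measure α}
    {g : α → ℝ} {r : ℝ} (hg : AEStronglyMeasurable g μ) (hr : 0 < r)
    (hnn : 0 ≤ᵐ[μ] g)
    (h : Integrable (fun x => g x ^ r) μ) : MemLp g (ENNReal.ofReal r) μ := by
  have h0 : (ENNReal.ofReal r) ≠ 0 := by
    simp only [ne_eq, ENNReal.ofReal_eq_zero, not_le]; exact hr
  have h' : Integrable (fun x => ‖g x‖ ^ r) μ := by
    refine h.congr ?_
    filter_upwards [hnn] with x hx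
    rw [Real.norm_of_nonneg hx]
  refine (memLp_norm_rpow_iff (p := ENNReal.ofReal r) hg h0 ENNReal.ofReal_ne_top).mp ?_
  rw [ENNReal.div_self h0 ENNReal.ofReal_ne_top, ENNReal.toReal_ofReal hr.le]
  exact memLp_one_iff_integrable.mpr h'

theorem stmt1 {M : Type*} [MeasurableSpace M] (μ : Measure M)
    (p n pstar β h : ℝ) (hp : 1 < p) (hn : p < n)
    (hpstar : pstar = n * p / (n - p)) (hβ : β = pstar / (2 * pstar + 1))
    (hh : h ≤ 0)
    (u a f : M → ℝ) (hu : Measurable u) (ha : Measurable a) (hf : Measurable f)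
    (hupos : ∀ᵐ x ∂μ, 0 < u x) (hanonneg : ∀ᵐ x ∂μ, 0 ≤ a x)
    (h1 : Integrable (fun x => u x ^ (p - 1)) μ)
    (h2 : Integrable (fun x => f x * u x ^ (pstar - 1)) μ)
    (h3 : Integrable (fun x => a x * u x ^ (-(pstar + 1))) μ)
    (h4 : Integrable (fun x => u x ^ pstar) μ)
    (h5 : Integrable (fun x => (max (-f x) 0) ^ pstar) μ)
    (hid : ∫ x, h * u x ^ (p - 1) ∂μ
        = ∫ x, f x * u x ^ (pstar - 1) ∂μ + ∫ x, a x * u x ^ (-(pstar + 1)) ∂μ) :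
    ∫ x, a x ^ β ∂μ
      ≤ (∫ x, (max (-f x) 0) ^ pstar ∂μ) ^ (β / pstar)
        * (∫ x, u x ^ pstar ∂μ) ^ (2 * pstar / (2 * pstar + 1)) := by
  have hnp : 0 < n - p := by linarith
  have hq1 : 1 < pstar := by
    rw [hpstar, lt_div_iff₀ hnp]; nlinarith
  have hq0 : 0 < pstar := by linarith
  have hβ0 : 0 < β := by rw [hβ]; positivity
  have hβ1 : β < 1 := by
    rw [hβ, div_lt_one (by linarith)]; linarith
  have hne0 : pstar ≠ 0 := by linarith
  have hne1 : pstar - 1 ≠ 0 := by linarith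
  have hne3 : pstar + 1 ≠ 0 := by linarith
  have hne2 : (2 * pstar + 1) ≠ 0 := by linarith
  have h1β : 1 - β = (pstar + 1) / (2 * pstar + 1) := by
    rw [hβ]; field_simp; ring
  set C := ∫ x, (max (-f x) 0) ^ pstar ∂μ with hC
  set U := ∫ x, u x ^ pstar ∂μ with hU
  set I3 := ∫ x, a x * u x ^ (-(pstar + 1)) ∂μ with hI3
  have hI3nn : 0 ≤ I3 := by
    refine integral_nonneg_of_ae ?_
    filter_upwards [hupos, hanonneg] with x hx1 hx2
    positivity
  have hCnn : 0 ≤ C := by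
    refine integral_nonneg fun x => ?_
    have : (0:ℝ) ≤ max (-f x) 0 := le_max_right _ _
    positivity
  have hUnn : 0 ≤ U := by
    refine integral_nonneg_of_ae ?_
    filter_upwards [hupos] with x hx
    positivity
  -- Step B : I3 ≤ ∫ |f⁻| u^(pstar-1)
  have hsum : ∫ x, f x * u x ^ (pstar - 1) ∂μ + I3 ≤ 0 := by
    rw [← hid]
    refine integral_nonpos_of_ae ?_
    filter_upwards [hupos] with x hx
    have h0 : (0:ℝ) ≤ u x ^ (p - 1) := by positivity
    exact mul_nonpos_iff.mpr (Or.inr ⟨hh, h0⟩)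
  have hgInt : Integrable (fun x => max (-(f x * u x ^ (pstar - 1))) 0) μ :=
    h2.neg.pos_part
  have hI3le : I3 ≤ ∫ x, (max (-f x) 0) * u x ^ (pstar - 1) ∂μ := by
    have e1 : ∫ x, (max (-f x) 0) * u x ^ (pstar - 1) ∂μ
        = ∫ x, max (-(f x * u x ^ (pstar - 1))) 0 ∂μ := by
      refine integral_congr_ae ?_
      filter_upwards [hupos] with x hx
      have hc : (0:ℝ) ≤ u x ^ (pstar - 1) := by positivity
      rw [max_mul_of_nonneg _ _ hc, zero_mul, neg_mul]
    rw [e1]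
    have step1 : I3 ≤ ∫ x, -(f x * u x ^ (pstar - 1)) ∂μ := by
      rw [integral_neg]; linarith
    refine step1.trans (integral_mono_ae h2.neg hgInt ?_)
    exact Filter.Eventually.of_forall fun x => le_max_left _ _
  -- Hölder 1
  have hcq : pstar.HolderConjugate (pstar / (pstar - 1)) := by
    rw [Real.holderConjugate_iff]
    constructor
    · exact hq1
    · rw [inv_div]
      field_simp
      ring
  have hF : MemLp (fun x => max (-f x) 0) (ENNReal.ofReal pstar) μ := by
    refine memLp_of_integrable_rpow ?_ hq0 ?_ h5
    · exact ((hf.neg.max measurable_const)).aestronglyMeasurable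
    · exact Filter.Eventually.of_forall fun x => le_max_right _ _
  have hexp1 : (pstar - 1) * (pstar / (pstar - 1)) = pstar := by
    rw [mul_comm]
    exact div_mul_cancel₀ _ hne1
  have hGint : Integrable (fun x => (u x ^ (pstar - 1)) ^ (pstar / (pstar - 1))) μ := by
    refine h4.congr ?_
    filter_upwards [hupos] with x hx
    rw [← Real.rpow_mul hx.le, hexp1]
  have hG : MemLp (fun x => u x ^ (pstar - 1)) (ENNReal.ofReal (pstar / (pstar - 1))) μ := by
    refine memLp_of_integrable_rpow ?_ hcq.symm.pos ?_ hGint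
    · exact (hu.pow measurable_const).aestronglyMeasurable
    · filter_upwards [hupos] with x hx; positivity
  have hH1 : ∫ x, (max (-f x) 0) * u x ^ (pstar - 1) ∂μ
      ≤ C ^ (1 / pstar) * U ^ ((pstar - 1) / pstar) := by
    have := integral_mul_le_Lp_mul_Lq_of_nonneg hcq
      (Filter.Eventually.of_forall fun x => le_max_right (-f x) 0)
      (by filter_upwards [hupos] with x hx; positivity) hF hG
    have e2 : ∫ x, (u x ^ (pstar - 1)) ^ (pstar / (pstar - 1)) ∂μ = U := by
      refine integral_congr_ae ?_
      filter_upwards [hupos] with x hx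
      rw [← Real.rpow_mul hx.le, hexp1]
    have e3 : 1 / (pstar / (pstar - 1)) = (pstar - 1) / pstar := by
      rw [one_div_div]
    rw [e2, e3] at this
    exact this
  have hkey : I3 ≤ C ^ (1 / pstar) * U ^ ((pstar - 1) / pstar) := hI3le.trans hH1
  -- Hölder 2
  have h1βpos : 0 < 1 - β := by linarith
  have hcr : (1 / β).HolderConjugate (1 / (1 - β)) := by
    rw [Real.holderConjugate_iff]
    constructor
    · rw [lt_div_iff₀ hβ0]; linarith
    · rw [one_div, one_div, inv_inv, inv_inv]; ring
  have hF2int : Integrable (fun x => ((a x * u x ^ (-(pstar + 1))) ^ β) ^ (1 / β)) μ := by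
    refine h3.congr ?_
    filter_upwards [hupos, hanonneg] with x hx1 hx2
    have hnn : (0:ℝ) ≤ a x * u x ^ (-(pstar + 1)) := by positivity
    rw [← Real.rpow_mul hnn, mul_one_div_cancel hβ0.ne', Real.rpow_one]
  have hF2 : MemLp (fun x => (a x * u x ^ (-(pstar + 1))) ^ β)
      (ENNReal.ofReal (1 / β)) μ := by
    refine memLp_of_integrable_rpow ?_ (by positivity) ?_ hF2int
    · exact ((ha.mul (hu.pow measurable_const)).pow measurable_const).aestronglyMeasurable
    · filter_upwards [hupos, hanonneg] with x hx1 hx2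
      have : (0:ℝ) ≤ a x * u x ^ (-(pstar + 1)) := by positivity
      positivity
  have hexp2 : β * (pstar + 1) * (1 / (1 - β)) = pstar := by
    rw [h1β, hβ]
    field_simp
  have hG2int : Integrable (fun x => (u x ^ (β * (pstar + 1))) ^ (1 / (1 - β))) μ := by
    refine h4.congr ?_
    filter_upwards [hupos] with x hx
    rw [← Real.rpow_mul hx.le, hexp2]
  have hG2 : MemLp (fun x => u x ^ (β * (pstar + 1)))
      (ENNReal.ofReal (1 / (1 - β))) μ := by
    refine memLp_of_integrable_rpow ?_ (by positivity) ?_ hG2int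
    · exact (hu.pow measurable_const).aestronglyMeasurable
    · filter_upwards [hupos] with x hx; positivity
  have hH2 : ∫ x, a x ^ β ∂μ ≤ I3 ^ β * U ^ (1 - β) := by
    have hint := integral_mul_le_Lp_mul_Lq_of_nonneg hcr
      (by filter_upwards [hupos, hanonneg] with x hx1 hx2
          have : (0:ℝ) ≤ a x * u x ^ (-(pstar + 1)) := by positivity
          positivity)
      (by filter_upwards [hupos] with x hx; positivity) hF2 hG2
    have e4 : ∫ x, (a x * u x ^ (-(pstar + 1))) ^ β * u x ^ (β * (pstar + 1)) ∂μ
        = ∫ x, a x ^ β ∂μ := by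
      refine integral_congr_ae ?_
      filter_upwards [hupos, hanonneg] with x hx1 hx2
      have hc : (0:ℝ) ≤ u x ^ (-(pstar + 1)) := by positivity
      rw [Real.mul_rpow hx2 hc, ← Real.rpow_mul hx1.le, mul_assoc,
        ← Real.rpow_add hx1]
      have : -(pstar + 1) * β + β * (pstar + 1) = 0 := by ring
      rw [this, Real.rpow_zero, mul_one]
    have e5 : ∫ x, ((a x * u x ^ (-(pstar + 1))) ^ β) ^ (1 / β) ∂μ = I3 := by
      refine integral_congr_ae ?_
      filter_upwards [hupos, hanonneg] with x hx1 hx2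
      have hnn : (0:ℝ) ≤ a x * u x ^ (-(pstar + 1)) := by positivity
      rw [← Real.rpow_mul hnn, mul_one_div_cancel hβ0.ne', Real.rpow_one]
    have e6 : ∫ x, (u x ^ (β * (pstar + 1))) ^ (1 / (1 - β)) ∂μ = U := by
      refine integral_congr_ae ?_
      filter_upwards [hupos] with x hx
      rw [← Real.rpow_mul hx.le, hexp2]
    rw [e4, e5, e6, one_div_one_div, one_div_one_div] at hint
    exact hint
  -- Combine
  have hmono : I3 ^ β ≤ (C ^ (1 / pstar) * U ^ ((pstar - 1) / pstar)) ^ β :=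
    Real.rpow_le_rpow hI3nn hkey hβ0.le
  have hsplit : (C ^ (1 / pstar) * U ^ ((pstar - 1) / pstar)) ^ β
      = C ^ (β / pstar) * U ^ ((pstar - 1) / pstar * β) := by
    rw [Real.mul_rpow (by positivity) (by positivity), ← Real.rpow_mul hCnn,
      ← Real.rpow_mul hUnn, one_div_mul_eq_div]
  have hexpfin : (pstar - 1) / pstar * β + (1 - β) = 2 * pstar / (2 * pstar + 1) := by
    rw [h1β, hβ]
    field_simp
    ring
  rcases eq_or_lt_of_le hUnn with hU0 | hU0
  · -- U = 0
    have hA0 : ∫ x, a x ^ β ∂μ ≤ 0 := by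
      have : U ^ (1 - β) = 0 := by
        rw [← hU0, Real.zero_rpow (by linarith)]
      calc ∫ x, a x ^ β ∂μ ≤ I3 ^ β * U ^ (1 - β) := hH2
        _ = 0 := by rw [this, mul_zero]
    have : U ^ (2 * pstar / (2 * pstar + 1)) = 0 := by
      rw [← hU0, Real.zero_rpow (by positivity)]
    rw [this, mul_zero]
    exact hA0
  · calc ∫ x, a x ^ β ∂μ ≤ I3 ^ β * U ^ (1 - β) := hH2
      _ ≤ (C ^ (1 / pstar) * U ^ ((pstar - 1) / pstar)) ^ β * U ^ (1 - β) :=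
        mul_le_mul_of_nonneg_right hmono (by positivity)
      _ = C ^ (β / pstar) * (U ^ ((pstar - 1) / pstar * β) * U ^ (1 - β)) := by
        rw [hsplit, mul_assoc]
      _ = C ^ (β / pstar) * U ^ (2 * pstar / (2 * pstar + 1)) := by
        rw [← Real.rpow_add hU0, hexpfin]
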